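/- For every positive real number β there exist 2-adic integers γ₁, γ₂ ∈ ℤ₂ such that C(γ₁,m)·C(γ₂,m) ≠ 0 for all m ≥ 0 and the lim inf as m → ∞ of v₂(C(γ₁,m)·C(γ₂,m))/m equals β. (Consequently the series Σ_m C(γ₁,m)C(γ₂,m)x^m over ℚ₂ has radius of convergence exactly 2^β.) -/

import Mathlib

/-- The generalized binomial coefficient `C(γ, m) = γ(γ-1)⋯(γ-m+1)/m!` for `γ ∈ ℚ_p`. -/
noncomputable def pChoose (p : ℕ) [Fact p.Prime] (γ : ℚ_[p]) (m : ℕ) : ℚ_[p] :=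
  (descPochhammer ℚ_[p] m).eval γ / (m.factorial : ℚ_[p])

open Filter Finset

namespace Stmt9Aux

def trunc (e : ℕ → ℕ) (K : ℕ) : ℕ := ∑ k ∈ Finset.range K, 2 ^ (e k)

noncomputable def gammaZ (e : ℕ → ℕ) : ℤ_[2] := ∑' k, (2:ℤ_[2]) ^ (e k)

noncomputable def nseq (β : ℝ) : ℕ → ℕ
  | 0 => 1
  | i + 1 => nseq β i + ⌈β * 2 ^ nseq β i⌉₊

noncomputable def e1 (β : ℝ) (k : ℕ) : ℕ := nseq β (2 * k)
noncomputable def e2 (β : ℝ) (k : ℕ) : ℕ := nseq β (2 * k + 1)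



lemma sum_range_two_pow (j : ℕ) : ∑ x ∈ range j, 2 ^ x = 2 ^ j - 1 := by
  induction j with
  | zero => simp
  | succ n ih =>
      rw [sum_range_succ, ih]
      have : 0 < 2 ^ n := Nat.pow_pos (by norm_num)
      rw [pow_succ]; omega

lemma sum_two_pow_lt {e : ℕ → ℕ} (he : Function.Injective e) {s : Finset ℕ} {j : ℕ}
    (h : ∀ k ∈ s, e k < j) : ∑ k ∈ s, 2 ^ (e k) < 2 ^ j := by
  have h1 : ∑ k ∈ s, 2 ^ (e k) = ∑ x ∈ s.image e, 2 ^ x := by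
    rw [Finset.sum_image (fun a _ b _ hab => he hab)]
  have h2 : s.image e ⊆ range j := by
    intro x hx
    rcases Finset.mem_image.mp hx with ⟨k, hk, rfl⟩
    exact Finset.mem_range.mpr (h k hk)
  calc ∑ k ∈ s, 2 ^ (e k) ≤ ∑ x ∈ range j, 2 ^ x := by
        rw [h1]; exact Finset.sum_le_sum_of_subset h2
    _ = 2 ^ j - 1 := sum_range_two_pow j
    _ < 2 ^ j := by have : 0 < 2 ^ j := Nat.pow_pos (by norm_num); omega

lemma trunc_lt {e : ℕ → ℕ} (he : Function.Injective e) {K j : ℕ} (h : ∀ k < K, e k < j) :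
    trunc e K < 2 ^ j :=
  sum_two_pow_lt he (fun k hk => h k (Finset.mem_range.mp hk))

lemma trunc_mod {e : ℕ → ℕ} (he : Function.Injective e) (K j : ℕ) :
    trunc e K % 2 ^ j = ∑ k ∈ (range K).filter (fun k => e k < j), 2 ^ (e k) := by
  have hsplit : trunc e K = (∑ k ∈ (range K).filter (fun k => e k < j), 2 ^ (e k)) +
      ∑ k ∈ (range K).filter (fun k => ¬ e k < j), 2 ^ (e k) :=
    (Finset.sum_filter_add_sum_filter_not _ _ _).symm
  have hdvd : 2 ^ j ∣ ∑ k ∈ (range K).filter (fun k => ¬ e k < j), 2 ^ (e k) := by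
    apply Finset.dvd_sum
    intro k hk
    exact pow_dvd_pow 2 (le_of_not_gt (Finset.mem_filter.mp hk).2)
  have hlt : (∑ k ∈ (range K).filter (fun k => e k < j), 2 ^ (e k)) < 2 ^ j :=
    sum_two_pow_lt he (fun k hk => (Finset.mem_filter.mp hk).2)
  obtain ⟨c, hc⟩ := hdvd
  rw [hsplit, hc, Nat.add_mul_mod_self_left, Nat.mod_eq_of_lt hlt]

lemma trunc_mod_eq {e : ℕ → ℕ} (he : Function.Injective e) {K R j : ℕ} (hRK : R ≤ K)
    (hlow : ∀ k < R, e k < j) (hhigh : ∀ k, R ≤ k → k < K → j ≤ e k) :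
    trunc e K % 2 ^ j = trunc e R := by
  rw [trunc_mod he]
  unfold trunc
  congr 1
  ext k
  simp only [Finset.mem_filter, Finset.mem_range]
  constructor
  · rintro ⟨hkK, hek⟩
    by_contra hk
    exact absurd hek (not_lt.mpr (hhigh k (le_of_not_gt hk) hkK))
  · intro hk
    exact ⟨lt_of_lt_of_le hk hRK, hlow k hk⟩

lemma trunc_mod_ge {e : ℕ → ℕ} (he : Function.Injective e) {K k₀ j : ℕ} (hk : k₀ < K)
    (hj : e k₀ < j) : 2 ^ (e k₀) ≤ trunc e K % 2 ^ j := by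
  rw [trunc_mod he]
  exact Finset.single_le_sum (f := fun k => 2 ^ (e k)) (fun _ _ => Nat.zero_le _)
    (Finset.mem_filter.mpr ⟨Finset.mem_range.mpr hk, hj⟩)

lemma trunc_mono {e : ℕ → ℕ} {K L : ℕ} (h : K ≤ L) : trunc e K ≤ trunc e L :=
  Finset.sum_le_sum_of_subset (Finset.range_subset_range.mpr h)

lemma le_trunc {e : ℕ → ℕ} {K k : ℕ} (hk : k < K) : 2 ^ (e k) ≤ trunc e K :=
  Finset.single_le_sum (f := fun k => 2 ^ (e k)) (fun _ _ => Nat.zero_le _)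
    (Finset.mem_range.mpr hk)





variable {β : ℝ}

lemma nseq_succ (i : ℕ) : nseq β (i + 1) = nseq β i + ⌈β * 2 ^ nseq β i⌉₊ := rfl

lemma ceil_pos' (hβ : 0 < β) (t : ℕ) : 1 ≤ ⌈β * 2 ^ t⌉₊ :=
  Nat.one_le_iff_ne_zero.mpr (by
    have : 0 < β * 2 ^ t := by positivity
    simpa [Nat.ceil_eq_zero, not_le] using (Nat.ceil_pos.mpr this).ne')

lemma nseq_lt_succ (hβ : 0 < β) (i : ℕ) : nseq β i < nseq β (i + 1) := by
  have := ceil_pos' hβ (nseq β i); rw [nseq_succ]; omega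

lemma nseq_strictMono (hβ : 0 < β) : StrictMono (nseq β) :=
  strictMono_nat_of_lt_succ (nseq_lt_succ hβ)

lemma nseq_ge (hβ : 0 < β) (i : ℕ) : i + 1 ≤ nseq β i := by
  induction i with
  | zero => simp [nseq]
  | succ n ih => have := nseq_lt_succ hβ n; omega

lemma nseq_gap_real (hβ : 0 < β) (i : ℕ) :
    β * 2 ^ nseq β i ≤ (nseq β (i + 1) : ℝ) - nseq β i := by
  have h := Nat.le_ceil (β * 2 ^ nseq β i)
  rw [nseq_succ]
  push_cast
  linarith

lemma nseq_gap_ceil_le (hβ : 0 < β) (i : ℕ) :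
    (nseq β (i + 1) : ℝ) - nseq β i ≤ β * 2 ^ nseq β i + 1 := by
  have h := Nat.ceil_lt_add_one (by positivity : (0:ℝ) ≤ β * 2 ^ nseq β i)
  rw [nseq_succ]
  push_cast
  linarith

/-- gaps of `nseq` exceed any bound eventually -/
lemma nseq_gap_unbounded (hβ : 0 < β) (M : ℕ) :
    ∃ i₀ : ℕ, ∀ i ≥ i₀, M + nseq β i < nseq β (i + 1) := by
  obtain ⟨j, hj⟩ := pow_unbounded_of_one_lt ((M : ℝ) / β) (one_lt_two (α := ℝ))
  refine ⟨j, fun i hi => ?_⟩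
  have h1 : (M : ℝ) < β * 2 ^ nseq β i := by
    have h2 : (2:ℝ) ^ j ≤ 2 ^ nseq β i := by
      apply pow_le_pow_right₀ (by norm_num)
      have := nseq_ge hβ i; omega
    have h3 : (M:ℝ)/β < 2 ^ nseq β i := lt_of_lt_of_le hj h2
    calc (M:ℝ) = β * ((M:ℝ)/β) := by field_simp
      _ < β * 2 ^ nseq β i := by exact mul_lt_mul_of_pos_left h3 hβ
  have h4 := nseq_gap_real hβ i
  have : (M:ℝ) < (nseq β (i+1) : ℝ) - nseq β i := lt_of_lt_of_le h1 h4
  have := nseq_lt_succ hβ i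
  exact_mod_cast (by push_cast at this ⊢; linarith : ((M + nseq β i : ℕ) : ℝ) < (nseq β (i+1) : ℕ))





lemma norm_two_pow_int (n : ℕ) : ‖(2:ℤ_[2]) ^ n‖ = (2:ℝ)⁻¹ ^ n := by
  rw [norm_pow]
  congr 1
  have : ((2:ℕ) : ℤ_[2]) = (2:ℤ_[2]) := by norm_cast
  rw [← this, PadicInt.norm_p]
  norm_num

lemma strictMono_add_le {e : ℕ → ℕ} (he : StrictMono e) (K k : ℕ) : e K + k ≤ e (k + K) := by
  induction k with
  | zero => simp
  | succ n ih =>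
      have h2 : e (n + K) < e (n + 1 + K) := he (by omega)
      omega

lemma summable_gamma {e : ℕ → ℕ} (he : StrictMono e) :
    Summable (fun k => (2:ℤ_[2]) ^ (e k)) := by
  apply Summable.of_norm
  apply Summable.of_nonneg_of_le (fun k => norm_nonneg _)
    (fun k => ?_) (summable_geometric_of_lt_one (r := (2:ℝ)⁻¹) (by norm_num) (by norm_num))
  rw [norm_two_pow_int]
  exact pow_le_pow_of_le_one (by norm_num) (by norm_num) (he.le_apply)

lemma gamma_sub_trunc {e : ℕ → ℕ} (he : StrictMono e) (K : ℕ) :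
    ‖gammaZ e - (trunc e K : ℤ_[2])‖ ≤ 2 * (2:ℝ)⁻¹ ^ (e K) := by
  have hs := summable_gamma he
  have htr : ((trunc e K : ℕ) : ℤ_[2]) = ∑ k ∈ range K, (2:ℤ_[2]) ^ (e k) := by
    unfold trunc; push_cast; ring
  have hkey := Summable.sum_add_tsum_nat_add (f := fun k => (2:ℤ_[2]) ^ (e k)) K hs
  have hdiff : gammaZ e - (trunc e K : ℤ_[2]) = ∑' k, (2:ℤ_[2]) ^ (e (k + K)) := by
    rw [htr, gammaZ, ← hkey]; ring
  rw [hdiff]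
  have hsn : Summable (fun k => ‖(2:ℤ_[2]) ^ (e (k + K))‖) := by
    simp only [norm_two_pow_int]
    apply Summable.of_nonneg_of_le (fun k => by positivity) (fun k => ?_)
      ((summable_geometric_of_lt_one (r := (2:ℝ)⁻¹) (by norm_num) (by norm_num)).mul_left
        ((2:ℝ)⁻¹ ^ (e K)))
    rw [← pow_add]
    exact pow_le_pow_of_le_one (by norm_num) (by norm_num) (strictMono_add_le he K k)
  calc ‖∑' k, (2:ℤ_[2]) ^ (e (k + K))‖ ≤ ∑' k, ‖(2:ℤ_[2]) ^ (e (k + K))‖ :=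
        norm_tsum_le_tsum_norm hsn
    _ ≤ ∑' k : ℕ, (2:ℝ)⁻¹ ^ (e K) * (2:ℝ)⁻¹ ^ k := by
        apply Summable.tsum_le_tsum _ hsn
          ((summable_geometric_of_lt_one (r := (2:ℝ)⁻¹) (by norm_num) (by norm_num)).mul_left _)
        intro k
        rw [norm_two_pow_int, ← pow_add]
        exact pow_le_pow_of_le_one (by norm_num) (by norm_num) (strictMono_add_le he K k)
    _ = (2:ℝ)⁻¹ ^ (e K) * (1 - 2⁻¹)⁻¹ := by
        rw [tsum_mul_left, tsum_geometric_of_lt_one (by norm_num) (by norm_num)]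
    _ = 2 * (2:ℝ)⁻¹ ^ (e K) := by norm_num; ring





lemma carry_iff {S m j : ℕ} (hmS : m ≤ S) :
    (2 ^ j ≤ m % 2 ^ j + (S - m) % 2 ^ j) ↔ S % 2 ^ j < m % 2 ^ j := by
  set q := 2 ^ j with hq
  have hq0 : 0 < q := Nat.pow_pos (by norm_num)
  have ha : m % q < q := Nat.mod_lt _ hq0
  have hb : (S - m) % q < q := Nat.mod_lt _ hq0
  have hS : S % q = (m % q + (S - m) % q) % q := by
    conv_lhs => rw [show S = m + (S - m) by omega]
    rw [Nat.add_mod]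
  rcases le_or_gt q (m % q + (S - m) % q) with h | h
  · have h2 : (m % q + (S - m) % q) % q = m % q + (S - m) % q - q := by
      rw [Nat.mod_eq_sub_mod h, Nat.mod_eq_of_lt (by omega)]
    omega
  · have h2 : (m % q + (S - m) % q) % q = m % q + (S - m) % q := Nat.mod_eq_of_lt h
    omega

lemma kummer_count {S m b : ℕ} (hmS : m ≤ S) (hb : Nat.log 2 S < b) :
    padicValNat 2 (S.choose m) =
      ((Finset.Ico 1 b).filter fun j => S % 2 ^ j < m % 2 ^ j).card := by
  rw [padicValNat_choose hmS hb]
  congr 1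
  apply Finset.filter_congr
  intro j _
  exact carry_iff hmS

lemma count_lower {e : ℕ → ℕ} (he : StrictMono e) {K R t m : ℕ}
    (hRK : R < K) (hlow : ∀ k < R, e k ≤ t)
    (hm1 : trunc e R < m) (hm2 : m < 2 ^ (t + 1)) (hut : t + 1 < e R) (hRK1 : R ≤ K - 1) :
    e R - (t + 1) ≤ ((Finset.Ico 1 (e (K - 1) + 1)).filter
      fun j => trunc e K % 2 ^ j < m % 2 ^ j).card := by
  have hsub : Finset.Ico (t + 2) (e R + 1) ⊆ (Finset.Ico 1 (e (K - 1) + 1)).filter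
      fun j => trunc e K % 2 ^ j < m % 2 ^ j := by
    intro j hj
    rw [Finset.mem_Ico] at hj
    have hjR : j ≤ e R := by omega
    refine Finset.mem_filter.mpr ⟨Finset.mem_Ico.mpr ⟨by omega, ?_⟩, ?_⟩
    · have : e R ≤ e (K - 1) := he.le_iff_le.mpr hRK1
      omega
    · have hmod : trunc e K % 2 ^ j = trunc e R :=
        trunc_mod_eq he.injective hRK.le
          (fun k hk => lt_of_le_of_lt (hlow k hk) (by omega))
          (fun k hk _ => le_trans hjR (he.le_iff_le.mpr hk))
      have hmm : m % 2 ^ j = m := Nat.mod_eq_of_lt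
        (lt_of_lt_of_le hm2 (Nat.pow_le_pow_right (by norm_num) (by omega)))
      rw [hmod, hmm]; exact hm1
  calc e R - (t + 1) = (Finset.Ico (t + 2) (e R + 1)).card := by
        rw [Nat.card_Ico]; omega
    _ ≤ _ := Finset.card_le_card hsub

lemma count_blocked {e : ℕ → ℕ} (he : StrictMono e) {K k₀ τ b : ℕ} (hk : k₀ < K)
    (hτ : e k₀ = τ) :
    ((Finset.Ico 1 b).filter fun j => trunc e K % 2 ^ j < 2 ^ τ % 2 ^ j).card = 0 := by
  rw [Finset.card_eq_zero]
  apply Finset.filter_false_of_mem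
  intro j _
  rcases le_or_gt j τ with h | h
  · have h0 : 2 ^ τ % 2 ^ j = 0 := Nat.mod_eq_zero_of_dvd (pow_dvd_pow 2 h)
    omega
  · have h1 : 2 ^ τ % 2 ^ j = 2 ^ τ :=
      Nat.mod_eq_of_lt (Nat.pow_lt_pow_right (by norm_num) h)
    have h2 : 2 ^ τ ≤ trunc e K % 2 ^ j := hτ ▸ trunc_mod_ge he.injective hk (by omega)
    omega

lemma count_good {e : ℕ → ℕ} (he : StrictMono e) {K R τ b : ℕ} (hRK : R < K)
    (hlow : ∀ k < R, e k < τ) (hhigh : τ < e R) (hb : e R < b) :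
    ((Finset.Ico 1 b).filter fun j => trunc e K % 2 ^ j < 2 ^ τ % 2 ^ j).card = e R - τ := by
  have hset : ((Finset.Ico 1 b).filter fun j => trunc e K % 2 ^ j < 2 ^ τ % 2 ^ j)
      = Finset.Ico (τ + 1) (e R + 1) := by
    ext j
    simp only [Finset.mem_filter, Finset.mem_Ico]
    constructor
    · rintro ⟨⟨hj1, hjb⟩, hcond⟩
      constructor
      · by_contra hlt
        push_neg at hlt
        have h0 : 2 ^ τ % 2 ^ j = 0 := Nat.mod_eq_zero_of_dvd (pow_dvd_pow 2 (by omega : j ≤ τ))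
        omega
      · by_contra hgt
        push_neg at hgt
        have h1 : 2 ^ τ % 2 ^ j = 2 ^ τ := by
          apply Nat.mod_eq_of_lt
          exact Nat.pow_lt_pow_right (by norm_num) (by omega)
        have h2 : 2 ^ (e R) ≤ trunc e K % 2 ^ j := trunc_mod_ge he.injective hRK (by omega)
        have h3 : 2 ^ τ < 2 ^ (e R) := Nat.pow_lt_pow_right (by norm_num) hhigh
        omega
    · rintro ⟨hj1, hj2⟩
      have hjτ : τ < j := by omega
      have hjR : j ≤ e R := by omega
      have h1 : 2 ^ τ % 2 ^ j = 2 ^ τ :=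
        Nat.mod_eq_of_lt (Nat.pow_lt_pow_right (by norm_num) hjτ)
      have hmod : trunc e K % 2 ^ j = trunc e R :=
        trunc_mod_eq he.injective hRK.le
          (fun k hk => lt_of_lt_of_le (hlow k hk) (by omega))
          (fun k hk _ => le_trans hjR (he.le_iff_le.mpr hk))
      have h2 : trunc e R < 2 ^ τ := trunc_lt he.injective hlow
      refine ⟨⟨by omega, by omega⟩, by omega⟩
  rw [hset, Nat.card_Ico]
  omega




lemma norm_natCast_Q (n : ℕ) (hn : n ≠ 0) : ‖(n : ℚ_[2])‖ = (2:ℝ)⁻¹ ^ (padicValNat 2 n) := by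
  have h0 : (n : ℚ_[2]) ≠ 0 := Nat.cast_ne_zero.mpr hn
  rw [Padic.norm_eq_zpow_neg_valuation h0, Padic.valuation_natCast,
    show ((2:ℕ):ℝ) = (2:ℝ) by norm_num, zpow_neg, ← inv_zpow, zpow_natCast]

lemma vfact_le {m : ℕ} (hm : 1 ≤ m) : padicValNat 2 m.factorial ≤ m - 1 := by
  have h := sub_one_mul_padicValNat_factorial (p := 2) m
  norm_num at h
  have hne : Nat.digits 2 m ≠ [] := Nat.digits_ne_nil_iff_ne_zero.mpr (by omega)
  have hlast := Nat.getLast_digit_ne_zero 2 (m := m) (by omega)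
  have hmem := List.getLast_mem hne
  have hsum : 1 ≤ (Nat.digits 2 m).sum := by
    have := List.single_le_sum (l := Nat.digits 2 m) (fun x _ => Nat.zero_le x) _ hmem
    omega
  omega

lemma pChoose_natCast {S m : ℕ} (hmS : m ≤ S) :
    pChoose 2 (S : ℚ_[2]) m = (S.choose m : ℚ_[2]) := by
  unfold pChoose
  rw [descPochhammer_eval_eq_descFactorial ℚ_[2] S m,
    Nat.descFactorial_eq_factorial_mul_choose]
  have hf : ((m.factorial : ℕ) : ℚ_[2]) ≠ 0 := Nat.cast_ne_zero.mpr m.factorial_ne_zero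
  push_cast
  field_simp

lemma eval_coe (g : ℤ_[2]) (m : ℕ) :
    (descPochhammer ℚ_[2] m).eval (g : ℚ_[2]) =
      (((descPochhammer ℤ_[2] m).eval g : ℤ_[2]) : ℚ_[2]) := by
  have hg : (g : ℚ_[2]) = PadicInt.Coe.ringHom (p := 2) g := rfl
  rw [← descPochhammer_map (PadicInt.Coe.ringHom (p := 2)) m, Polynomial.eval_map, hg,
    Polynomial.eval₂_at_apply]
  rfl

lemma transfer {g : ℤ_[2]} {S m : ℕ} (hmS : m ≤ S)
    (hnorm : ‖g - (S : ℤ_[2])‖ * 2 ^ (padicValNat 2 m.factorial)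
      < (2:ℝ)⁻¹ ^ (padicValNat 2 (S.choose m))) :
    pChoose 2 (g : ℚ_[2]) m ≠ 0 ∧
      (pChoose 2 (g : ℚ_[2]) m).valuation = padicValNat 2 (S.choose m) := by
  set v := padicValNat 2 (S.choose m) with hv
  have hc0 : (S.choose m) ≠ 0 := (Nat.choose_pos hmS).ne'
  have hcQ : ((S.choose m : ℕ) : ℚ_[2]) ≠ 0 := Nat.cast_ne_zero.mpr hc0
  have hcnorm : ‖((S.choose m : ℕ) : ℚ_[2])‖ = (2:ℝ)⁻¹ ^ v := norm_natCast_Q _ hc0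
  -- difference bound
  obtain ⟨q, hq⟩ := Polynomial.sub_dvd_eval_sub g ((S:ℕ) : ℤ_[2]) (descPochhammer ℤ_[2] m)
  have hfQ : ((m.factorial : ℕ) : ℚ_[2]) ≠ 0 := Nat.cast_ne_zero.mpr m.factorial_ne_zero
  have hSZQ : (((S : ℕ) : ℤ_[2]) : ℚ_[2]) = ((S : ℕ) : ℚ_[2]) := by push_cast; rfl
  have hdiff : pChoose 2 (g : ℚ_[2]) m - ((S.choose m : ℕ) : ℚ_[2])
      = (((g - (S : ℤ_[2])) * q : ℤ_[2]) : ℚ_[2]) / ((m.factorial : ℕ) : ℚ_[2]) := by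
    rw [← pChoose_natCast hmS]
    unfold pChoose
    rw [div_sub_div_same, eval_coe, ← hSZQ, eval_coe, ← PadicInt.coe_sub, hq]
  have hdnorm : ‖pChoose 2 (g : ℚ_[2]) m - ((S.choose m : ℕ) : ℚ_[2])‖
      ≤ ‖g - (S : ℤ_[2])‖ * 2 ^ (padicValNat 2 m.factorial) := by
    rw [hdiff, norm_div, norm_natCast_Q _ m.factorial_ne_zero]
    rw [← PadicInt.norm_def, norm_mul]
    rw [inv_pow, div_eq_mul_inv, inv_inv]
    have hq1 : ‖g - ((S:ℕ) : ℤ_[2])‖ * ‖q‖ ≤ ‖g - ((S:ℕ) : ℤ_[2])‖ :=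
      mul_le_of_le_one_right (norm_nonneg _) (PadicInt.norm_le_one q)
    exact mul_le_mul_of_nonneg_right hq1 (by positivity)
  have hlt : ‖pChoose 2 (g : ℚ_[2]) m - ((S.choose m : ℕ) : ℚ_[2])‖
      < ‖((S.choose m : ℕ) : ℚ_[2])‖ := by
    rw [hcnorm]; exact lt_of_le_of_lt hdnorm hnorm
  have hne : ‖((S.choose m : ℕ) : ℚ_[2])‖
      ≠ ‖pChoose 2 (g : ℚ_[2]) m - ((S.choose m : ℕ) : ℚ_[2])‖ := (ne_of_gt hlt)
  have heq : ‖pChoose 2 (g : ℚ_[2]) m‖ = ‖((S.choose m : ℕ) : ℚ_[2])‖ := by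
    have hrw : pChoose 2 (g : ℚ_[2]) m
        = ((S.choose m : ℕ) : ℚ_[2]) + (pChoose 2 (g : ℚ_[2]) m - ((S.choose m : ℕ) : ℚ_[2])) := by
      ring
    rw [hrw, Padic.add_eq_max_of_ne hne, max_eq_left (le_of_lt hlt)]
  have hne0 : pChoose 2 (g : ℚ_[2]) m ≠ 0 := by
    intro h
    rw [h, norm_zero] at heq
    exact hcQ (norm_eq_zero.mp heq.symm)
  refine ⟨hne0, ?_⟩
  have h1 := Padic.norm_eq_zpow_neg_valuation hne0
  have h2 := Padic.norm_eq_zpow_neg_valuation hcQ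
  rw [heq, h2, Padic.valuation_natCast] at h1
  have := (zpow_right_inj₀ (a := ((2:ℕ):ℝ)) (by norm_num) (by norm_num)).mp h1.symm
  omega





lemma exists_K {e : ℕ → ℕ} (he : StrictMono e)
    (hgap : ∀ M : ℕ, ∃ k₀ : ℕ, ∀ k ≥ k₀, M + e k < e (k + 1)) (m J : ℕ) :
    ∃ K, J < K ∧ m + e (K - 1) < e K ∧ m ≤ 2 ^ e (K - 1) := by
  obtain ⟨k₀, hk₀⟩ := hgap m
  refine ⟨max (max (J + 1) (k₀ + 1)) (m + 1), by omega, ?_, ?_⟩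
  · set K := max (max (J + 1) (k₀ + 1)) (m + 1) with hK
    have h1 : K - 1 ≥ k₀ := by omega
    have := hk₀ (K - 1) h1
    have hK1 : K - 1 + 1 = K := by omega
    rwa [hK1] at this
  · set K := max (max (J + 1) (k₀ + 1)) (m + 1) with hK
    have h1 : m ≤ K - 1 := by omega
    have h2 : K - 1 ≤ e (K - 1) := he.le_apply
    have h3 : e (K - 1) < 2 ^ e (K - 1) := Nat.lt_two_pow_self
    omega

lemma trunc_ne_zero {e : ℕ → ℕ} {K : ℕ} (hK : 0 < K) : trunc e K ≠ 0 := by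
  have := le_trunc (e := e) (k := 0) hK
  have : 0 < 2 ^ (e 0) := Nat.pow_pos (by norm_num)
  omega

lemma log_trunc_lt {e : ℕ → ℕ} (he : StrictMono e) {K : ℕ} (hK : 0 < K) :
    Nat.log 2 (trunc e K) < e (K - 1) + 1 := by
  apply Nat.log_lt_of_lt_pow (trunc_ne_zero hK)
  exact trunc_lt he.injective (fun k hk => by
    have : e k ≤ e (K - 1) := he.le_iff_le.mpr (by omega)
    omega)

lemma val_eq_card {e : ℕ → ℕ} (he : StrictMono e)
    (hgap : ∀ M : ℕ, ∃ k₀ : ℕ, ∀ k ≥ k₀, M + e k < e (k + 1)) (m J : ℕ) (hm : 1 ≤ m) :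
    ∃ K, J < K ∧ pChoose 2 (gammaZ e : ℚ_[2]) m ≠ 0 ∧
      (pChoose 2 (gammaZ e : ℚ_[2]) m).valuation =
        (((Finset.Ico 1 (e (K - 1) + 1)).filter
          fun j => trunc e K % 2 ^ j < m % 2 ^ j).card : ℕ) := by
  obtain ⟨K, hJK, hgapK, hm2⟩ := exists_K he hgap m J
  have hK0 : 0 < K := by omega
  set S := trunc e K with hS
  have hmS : m ≤ S := le_trans hm2 (le_trunc (by omega))
  have hlog : Nat.log 2 S < e (K - 1) + 1 := by rw [hS]; exact log_trunc_lt he hK0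
  have hvc : padicValNat 2 (S.choose m) ≤ e (K - 1) := by
    have h1 : padicValNat 2 (S.choose m) = (S.choose m).factorization 2 :=
      (Nat.factorization_def _ (by norm_num)).symm
    rw [h1]
    exact le_trans Nat.factorization_choose_le_log (by omega)
  have hnorm : ‖gammaZ e - (S : ℤ_[2])‖ * 2 ^ (padicValNat 2 m.factorial)
      < (2:ℝ)⁻¹ ^ (padicValNat 2 (S.choose m)) := by
    have h1 : ‖gammaZ e - (S : ℤ_[2])‖ ≤ 2 * (2:ℝ)⁻¹ ^ (e K) := gamma_sub_trunc he K
    have h2 : (2:ℝ) ^ (padicValNat 2 m.factorial) ≤ 2 ^ (m - 1) := by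
      apply pow_le_pow_right₀ (by norm_num) (vfact_le hm)
    calc ‖gammaZ e - (S : ℤ_[2])‖ * 2 ^ (padicValNat 2 m.factorial)
        ≤ (2 * (2:ℝ)⁻¹ ^ (e K)) * 2 ^ (m - 1) := by
          apply mul_le_mul h1 h2 (by positivity) (by positivity)
      _ = 2 ^ m / 2 ^ (e K) := by
          rw [inv_pow]
          rw [show (2:ℝ) * ((2:ℝ) ^ (e K))⁻¹ * 2 ^ (m - 1) = (2 * 2 ^ (m-1)) / 2 ^ (e K) by ring]
          congr 1
          rw [← pow_succ']
          congr 1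
          omega
      _ < (2:ℝ)⁻¹ ^ (e (K - 1)) := by
          rw [inv_pow, div_lt_iff₀ (by positivity), inv_mul_eq_div, lt_div_iff₀ (by positivity),
            ← pow_add]
          apply pow_lt_pow_right₀ (by norm_num)
          omega
      _ ≤ (2:ℝ)⁻¹ ^ (padicValNat 2 (S.choose m)) := by
          apply pow_le_pow_of_le_one (by norm_num) (by norm_num) hvc
  obtain ⟨hne, hval⟩ := transfer hmS hnorm
  refine ⟨K, hJK, hne, ?_⟩
  rw [hval, kummer_count hmS hlog]



lemma val_nonneg_ne {e : ℕ → ℕ} (he : StrictMono e)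
    (hgap : ∀ M : ℕ, ∃ k₀ : ℕ, ∀ k ≥ k₀, M + e k < e (k + 1)) (m : ℕ) (hm : 1 ≤ m) :
    pChoose 2 (gammaZ e : ℚ_[2]) m ≠ 0 ∧ 0 ≤ (pChoose 2 (gammaZ e : ℚ_[2]) m).valuation := by
  obtain ⟨K, _, hne, hval⟩ := val_eq_card he hgap m 0 hm
  exact ⟨hne, by rw [hval]; exact Int.natCast_nonneg _⟩




/- ### digit sequences of the two gammas -/


variable {β : ℝ}

lemma he1 (hβ : 0 < β) : StrictMono (e1 β) :=
  fun _ _ h => nseq_strictMono hβ (by omega)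

lemma he2 (hβ : 0 < β) : StrictMono (e2 β) :=
  fun _ _ h => nseq_strictMono hβ (by omega)

lemma hgap1 (hβ : 0 < β) : ∀ M : ℕ, ∃ k₀ : ℕ, ∀ k ≥ k₀, M + e1 β k < e1 β (k + 1) := by
  intro M
  obtain ⟨i₀, hi₀⟩ := nseq_gap_unbounded hβ M
  refine ⟨i₀, fun k hk => ?_⟩
  have h1 : M + nseq β (2 * k) < nseq β (2 * k + 1) := hi₀ (2 * k) (by omega)
  have h2 : nseq β (2 * k + 1) ≤ nseq β (2 * (k + 1)) := (nseq_strictMono hβ).le_iff_le.mpr (by omega)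
  unfold e1; omega

lemma hgap2 (hβ : 0 < β) : ∀ M : ℕ, ∃ k₀ : ℕ, ∀ k ≥ k₀, M + e2 β k < e2 β (k + 1) := by
  intro M
  obtain ⟨i₀, hi₀⟩ := nseq_gap_unbounded hβ M
  refine ⟨i₀, fun k hk => ?_⟩
  have h1 : M + nseq β (2 * k + 1) < nseq β (2 * k + 2) := hi₀ (2 * k + 1) (by omega)
  have h2 : nseq β (2 * k + 2) ≤ nseq β (2 * (k + 1) + 1) :=
    (nseq_strictMono hβ).le_iff_le.mpr (by omega)
  unfold e2; omega

/-- witness computation at `m = 2 ^ nseq β i`, `i` even -/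
lemma witness (hβ : 0 < β) {i : ℕ} (hi : 2 ≤ i) (hev : i % 2 = 0) :
    pChoose 2 (gammaZ (e1 β) : ℚ_[2]) (2 ^ nseq β i) ≠ 0 ∧
    pChoose 2 (gammaZ (e2 β) : ℚ_[2]) (2 ^ nseq β i) ≠ 0 ∧
    (pChoose 2 (gammaZ (e1 β) : ℚ_[2]) (2 ^ nseq β i)).valuation = 0 ∧
    (pChoose 2 (gammaZ (e2 β) : ℚ_[2]) (2 ^ nseq β i)).valuation
      = ((nseq β (i + 1) - nseq β i : ℕ) : ℤ) := by
  have hm : 1 ≤ 2 ^ nseq β i := Nat.one_le_two_pow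
  obtain ⟨K₁, hK₁, hne1, hval1⟩ := val_eq_card (he1 hβ) (hgap1 hβ) (2 ^ nseq β i) (i / 2 + 1) hm
  obtain ⟨K₂, hK₂, hne2, hval2⟩ := val_eq_card (he2 hβ) (hgap2 hβ) (2 ^ nseq β i) (i / 2 + 1) hm
  refine ⟨hne1, hne2, ?_, ?_⟩
  · rw [hval1, count_blocked (he1 hβ) (k₀ := i / 2) (by omega) (by unfold e1; congr 1; omega)]
    norm_num
  · rw [hval2, count_good (he2 hβ) (R := i / 2) (by omega)
      (fun k hk => by
        apply nseq_strictMono hβ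
        omega)
      (by
        have : 2 * (i / 2) + 1 = i + 1 := by omega
        unfold e2
        rw [this]
        exact nseq_lt_succ hβ i)
      (by
        have h := (he2 hβ).le_iff_le.mpr (show i / 2 ≤ K₂ - 1 by omega)
        omega)]
    have h12 : 2 * (i / 2) + 1 = i + 1 := by omega
    unfold e2
    rw [h12]





variable {β : ℝ}

/-- real-arithmetic glue for the lower bound -/
lemma glue (hβ : 0 < β) {i t m c : ℕ} (hi : 2 ≤ i)
    (hti : nseq β i ≤ t) (hmt : 2 ^ t ≤ m) (hmt2 : m < 2 ^ (t + 1)) (htn : t < nseq β (i + 1))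
    (hcase : nseq β (i + 2) - (t + 1) ≤ c ∨
      (nseq β (i + 1) - (t + 1) ≤ c ∧ t = nseq β i ∧
        m ≤ 2 ^ nseq β i + 2 ^ (nseq β (i - 2) + 1))) :
    β * m - (β * 2 ^ (nseq β (i - 2) + 1) + 1) ≤ (c : ℝ) := by
  have hpos : (0:ℝ) < β * 2 ^ (nseq β (i - 2) + 1) + 1 := by positivity
  rcases hcase with hA | ⟨hB1, hB2, hB3⟩
  · -- case A : contribution ≥ gap above nseq (i+1)
    have h1 : (nseq β (i + 2) : ℝ) ≤ (c : ℝ) + t + 1 := by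
      have h : nseq β (i + 2) ≤ c + (t + 1) := by omega
      have h' : ((nseq β (i + 2) : ℕ) : ℝ) ≤ ((c + (t + 1) : ℕ) : ℝ) := by exact_mod_cast h
      push_cast at h'
      linarith
    have h2 : β * 2 ^ nseq β (i + 1) ≤ (nseq β (i + 2) : ℝ) - nseq β (i + 1) :=
      nseq_gap_real hβ (i + 1)
    have h3 : ((t : ℝ) + 1) ≤ nseq β (i + 1) := by exact_mod_cast htn
    have h4 : (m : ℝ) ≤ 2 ^ nseq β (i + 1) := by
      have hm1 : (m : ℝ) < 2 ^ (t + 1) := by exact_mod_cast hmt2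
      have hm2 : (2:ℝ) ^ (t + 1) ≤ 2 ^ nseq β (i + 1) := by
        apply pow_le_pow_right₀ (by norm_num)
        omega
      linarith
    have h5 : β * m ≤ β * 2 ^ nseq β (i + 1) := by
      apply mul_le_mul_of_nonneg_left h4 hβ.le
    linarith
  · -- case B : t = nseq i, m close to 2 ^ nseq i
    have h1 : (nseq β (i + 1) : ℝ) ≤ (c : ℝ) + t + 1 := by
      have h : nseq β (i + 1) ≤ c + (t + 1) := by omega
      have h' : ((nseq β (i + 1) : ℕ) : ℝ) ≤ ((c + (t + 1) : ℕ) : ℝ) := by exact_mod_cast h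
      push_cast at h'
      linarith
    have h2 : β * 2 ^ nseq β i ≤ (nseq β (i + 1) : ℝ) - nseq β i := nseq_gap_real hβ i
    have h3 : (m : ℝ) ≤ 2 ^ nseq β i + 2 ^ (nseq β (i - 2) + 1) := by
      have h' : ((m : ℕ) : ℝ) ≤ ((2 ^ nseq β i + 2 ^ (nseq β (i - 2) + 1) : ℕ) : ℝ) := by
        exact_mod_cast hB3
      push_cast at h'
      linarith
    have h4 : β * m ≤ β * 2 ^ nseq β i + β * 2 ^ (nseq β (i - 2) + 1) := by
      have := mul_le_mul_of_nonneg_left h3 hβ.le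
      linarith [this]
    have h5 : ((t:ℝ)) = nseq β i := by exact_mod_cast hB2
    linarith





variable {β : ℝ}

lemma count_lower' {e : ℕ → ℕ} (he : StrictMono e) {K R t m : ℕ}
    (hRK : R < K) (hlow : ∀ k < R, e k ≤ t)
    (hm1 : trunc e R < m) (hm2 : m < 2 ^ (t + 1)) :
    e R - (t + 1) ≤ ((Finset.Ico 1 (e (K - 1) + 1)).filter
      fun j => trunc e K % 2 ^ j < m % 2 ^ j).card := by
  rcases lt_or_ge (t + 1) (e R) with h | h
  · exact count_lower he hRK hlow hm1 hm2 h (by omega)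
  · have h0 : e R - (t + 1) = 0 := by omega
    rw [h0]
    exact Nat.zero_le _

lemma trunc_succ (e : ℕ → ℕ) (K : ℕ) : trunc e (K + 1) = trunc e K + 2 ^ (e K) := by
  unfold trunc; rw [Finset.sum_range_succ]

lemma lower (hβ : 0 < β) {i m : ℕ} (hi : 2 ≤ i)
    (hm1 : 2 ^ nseq β i ≤ m) (hm2 : m < 2 ^ nseq β (i + 1)) :
    β * m - (β * 2 ^ (nseq β (i - 2) + 1) + 1)
      ≤ (((pChoose 2 (gammaZ (e1 β) : ℚ_[2]) m).valuation
          + (pChoose 2 (gammaZ (e2 β) : ℚ_[2]) m).valuation : ℤ) : ℝ) := by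
  have hm0 : 1 ≤ m := le_trans Nat.one_le_two_pow hm1
  set t := Nat.log 2 m with htdef
  have ht1 : 2 ^ t ≤ m := Nat.pow_log_le_self 2 (by omega)
  have ht2 : m < 2 ^ (t + 1) := Nat.lt_pow_succ_log_self (by norm_num) m
  have hti : nseq β i ≤ t := (Nat.le_log_iff_pow_le (by norm_num) (by omega)).mpr hm1
  have htn : t < nseq β (i + 1) := Nat.log_lt_of_lt_pow (by omega) hm2
  obtain ⟨K₁, hK₁, hne1, hval1⟩ := val_eq_card (he1 hβ) (hgap1 hβ) m (i + 5) hm0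
  obtain ⟨K₂, hK₂, hne2, hval2⟩ := val_eq_card (he2 hβ) (hgap2 hβ) m (i + 5) hm0
  set c₁ := ((Finset.Ico 1 (e1 β (K₁ - 1) + 1)).filter
    fun j => trunc (e1 β) K₁ % 2 ^ j < m % 2 ^ j).card with hc₁
  set c₂ := ((Finset.Ico 1 (e2 β (K₂ - 1) + 1)).filter
    fun j => trunc (e2 β) K₂ % 2 ^ j < m % 2 ^ j).card with hc₂
  rw [hval1, hval2]
  have hmono := nseq_strictMono hβ
  have hcast : (((c₁ : ℤ) + (c₂ : ℤ) : ℤ) : ℝ) = ((c₁ + c₂ : ℕ) : ℝ) := by push_cast; ring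
  rw [hcast]
  apply glue hβ hi hti ht1 ht2 htn
  rcases Nat.even_or_odd i with hpar | hpar
  · -- i even ; next digit owner is e2 (at R = i/2), other is e1
    have hp : i % 2 = 0 := Nat.even_iff.mp hpar
    have hE2R : e2 β (i / 2) = nseq β (i + 1) := by unfold e2; congr 1; omega
    have hE1R : e1 β (i / 2) = nseq β i := by unfold e1; congr 1; omega
    have hE1R' : e1 β (i / 2 + 1) = nseq β (i + 2) := by unfold e1; congr 1; omega
    have hN : nseq β (i + 1) - (t + 1) ≤ c₂ := by
      rw [← hE2R]
      apply count_lower' (he2 hβ) (by omega)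
        (fun k hk => le_trans (hmono.le_iff_le.mpr (by omega : 2 * k + 1 ≤ i)) hti)
        ?_ ht2
      calc trunc (e2 β) (i / 2) < 2 ^ nseq β i :=
            trunc_lt (he2 hβ).injective (fun k hk => hmono (by omega : 2 * k + 1 < i))
        _ ≤ 2 ^ t := Nat.pow_le_pow_right (by norm_num) hti
        _ ≤ m := ht1
    rcases lt_or_ge (trunc (e1 β) (i / 2 + 1)) m with hO | hO
    · left
      have hc : e1 β (i / 2 + 1) - (t + 1) ≤ c₁ := by
        apply count_lower' (he1 hβ) (by omega)
          (fun k hk => le_trans (hmono.le_iff_le.mpr (by omega : 2 * k ≤ i)) hti) hO ht2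
      rw [hE1R'] at hc
      exact le_trans hc (Nat.le_add_right _ _)
    · right
      have hsmall : trunc (e1 β) (i / 2) < 2 ^ (nseq β (i - 2) + 1) := by
        apply trunc_lt (he1 hβ).injective
        intro k hk
        unfold e1
        have : nseq β (2 * k) ≤ nseq β (i - 2) := hmono.le_iff_le.mpr (by omega)
        omega
      have hsum : trunc (e1 β) (i / 2 + 1) = trunc (e1 β) (i / 2) + 2 ^ nseq β i := by
        rw [trunc_succ, hE1R]
      have hblock : trunc (e1 β) (i / 2 + 1) < 2 ^ (nseq β i + 1) := by
        apply trunc_lt (he1 hβ).injective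
        intro k hk
        unfold e1
        have : nseq β (2 * k) ≤ nseq β i := hmono.le_iff_le.mpr (by omega)
        omega
      have hteq : t = nseq β i := by
        have h1 : 2 ^ t < 2 ^ (nseq β i + 1) := by omega
        have h2 : t < nseq β i + 1 := (Nat.pow_lt_pow_iff_right (by norm_num)).mp h1
        omega
      exact ⟨le_trans hN (Nat.le_add_left _ _), hteq, by omega⟩
  · -- i odd ; next digit owner is e1 (at R = (i+1)/2), other is e2
    have hp : i % 2 = 1 := Nat.odd_iff.mp hpar
    have hE1R : e1 β ((i + 1) / 2) = nseq β (i + 1) := by unfold e1; congr 1; omega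
    have hE2R : e2 β ((i + 1) / 2) = nseq β (i + 2) := by unfold e2; congr 1; omega
    have hE2R0 : e2 β ((i - 1) / 2) = nseq β i := by unfold e2; congr 1; omega
    have hN : nseq β (i + 1) - (t + 1) ≤ c₁ := by
      rw [← hE1R]
      apply count_lower' (he1 hβ) (by omega)
        (fun k hk => le_trans (hmono.le_iff_le.mpr (by omega : 2 * k ≤ i)) hti)
        ?_ ht2
      calc trunc (e1 β) ((i + 1) / 2) < 2 ^ nseq β i :=
            trunc_lt (he1 hβ).injective (fun k hk => hmono (by omega : 2 * k < i))
        _ ≤ 2 ^ t := Nat.pow_le_pow_right (by norm_num) hti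
        _ ≤ m := ht1
    rcases lt_or_ge (trunc (e2 β) ((i + 1) / 2)) m with hO | hO
    · left
      have hc : e2 β ((i + 1) / 2) - (t + 1) ≤ c₂ := by
        apply count_lower' (he2 hβ) (by omega)
          (fun k hk => le_trans (hmono.le_iff_le.mpr (by omega : 2 * k + 1 ≤ i)) hti) hO ht2
      rw [hE2R] at hc
      exact le_trans hc (Nat.le_add_left _ _)
    · right
      have hsmall : trunc (e2 β) ((i - 1) / 2) < 2 ^ (nseq β (i - 2) + 1) := by
        apply trunc_lt (he2 hβ).injective
        intro k hk
        unfold e2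
        have : nseq β (2 * k + 1) ≤ nseq β (i - 2) := hmono.le_iff_le.mpr (by omega)
        omega
      have hsum : trunc (e2 β) ((i + 1) / 2) = trunc (e2 β) ((i - 1) / 2) + 2 ^ nseq β i := by
        have hidx : (i + 1) / 2 = (i - 1) / 2 + 1 := by omega
        rw [hidx, trunc_succ, hE2R0]
      have hblock : trunc (e2 β) ((i + 1) / 2) < 2 ^ (nseq β i + 1) := by
        apply trunc_lt (he2 hβ).injective
        intro k hk
        unfold e2
        have : nseq β (2 * k + 1) ≤ nseq β i := hmono.le_iff_le.mpr (by omega)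
        omega
      have hteq : t = nseq β i := by
        have h1 : 2 ^ t < 2 ^ (nseq β i + 1) := by omega
        have h2 : t < nseq β i + 1 := (Nat.pow_lt_pow_iff_right (by norm_num)).mp h1
        omega
      exact ⟨le_trans hN (Nat.le_add_right _ _), hteq, by omega⟩





variable {β : ℝ}

lemma pChoose_zero (g : ℚ_[2]) : pChoose 2 g 0 = 1 := by
  unfold pChoose
  rw [descPochhammer_zero, Polynomial.eval_one]
  norm_num

lemma epsilon_bound (hβ : 0 < β) {ε : ℝ} (hε : 0 < ε) :
    ∃ I, 2 ≤ I ∧ ∀ i, I ≤ i → β * 2 ^ (nseq β (i - 2) + 1) + 1 ≤ ε * 2 ^ nseq β i := by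
  obtain ⟨j, hj⟩ := pow_unbounded_of_one_lt ((β + 1) / (ε * β)) (one_lt_two (α := ℝ))
  refine ⟨j + 2, by omega, fun i hi => ?_⟩
  set G := ⌈β * 2 ^ i⌉₊ with hG
  have hkey : nseq β (i - 2) + 1 + G ≤ nseq β i := by
    have hi1 : i - 1 + 1 = i := by omega
    have h1 : nseq β i = nseq β (i - 1) + ⌈β * 2 ^ nseq β (i - 1)⌉₊ := by
      conv_lhs => rw [← hi1]
      exact nseq_succ (i - 1)
    have h2 : nseq β (i - 2) + 1 ≤ nseq β (i - 1) := by
      have := nseq_strictMono hβ (show i - 2 < i - 1 by omega)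
      omega
    have h3 : G ≤ ⌈β * 2 ^ nseq β (i - 1)⌉₊ := by
      apply Nat.ceil_le_ceil
      apply mul_le_mul_of_nonneg_left _ hβ.le
      apply pow_le_pow_right₀ (by norm_num)
      have := nseq_ge hβ (i - 1)
      omega
    omega
  have h2 : (2:ℝ) ^ (nseq β (i - 2) + 1) * 2 ^ G ≤ 2 ^ nseq β i := by
    rw [← pow_add]
    exact pow_le_pow_right₀ (by norm_num) hkey
  have h3 : (β + 1) ≤ ε * 2 ^ G := by
    have ha : (G : ℝ) ≤ 2 ^ G := by
      have := Nat.lt_two_pow_self (n := G)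
      have h' : ((G : ℕ) : ℝ) < ((2 ^ G : ℕ) : ℝ) := by exact_mod_cast this
      push_cast at h'
      linarith
    have hb : β * 2 ^ i ≤ (G : ℝ) := Nat.le_ceil _
    have hc : (2:ℝ) ^ j ≤ 2 ^ i := pow_le_pow_right₀ (by norm_num) (by omega)
    have hd : (β + 1) / (ε * β) < 2 ^ i := lt_of_lt_of_le hj hc
    have he0 : (β + 1) < ε * (β * 2 ^ i) := by
      rw [div_lt_iff₀ (by positivity)] at hd
      calc (β + 1) < 2 ^ i * (ε * β) := hd
        _ = ε * (β * 2 ^ i) := by ring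
    have : (β + 1) < ε * 2 ^ G :=
      calc (β + 1) < ε * (β * 2 ^ i) := he0
        _ ≤ ε * G := by apply mul_le_mul_of_nonneg_left hb hε.le
        _ ≤ ε * 2 ^ G := by apply mul_le_mul_of_nonneg_left ha hε.le
    exact this.le
  have hX : (1:ℝ) ≤ 2 ^ (nseq β (i - 2)) := one_le_pow₀ (by norm_num)
  calc β * 2 ^ (nseq β (i - 2) + 1) + 1
      ≤ (β + 1) * 2 ^ (nseq β (i - 2) + 1) := by ring_nf; nlinarith [hX]
    _ ≤ (ε * 2 ^ G) * 2 ^ (nseq β (i - 2) + 1) := by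
        apply mul_le_mul_of_nonneg_right h3 (by positivity)
    _ = ε * (2 ^ (nseq β (i - 2) + 1) * 2 ^ G) := by ring
    _ ≤ ε * 2 ^ nseq β i := mul_le_mul_of_nonneg_left h2 hε.le

theorem main (hβ : 0 < β) :
    ∃ γ₁ γ₂ : ℤ_[2],
      (∀ m : ℕ, pChoose 2 (γ₁ : ℚ_[2]) m * pChoose 2 (γ₂ : ℚ_[2]) m ≠ 0) ∧
      Filter.liminf (fun m : ℕ =>
          (((pChoose 2 (γ₁ : ℚ_[2]) m * pChoose 2 (γ₂ : ℚ_[2]) m).valuation : ℝ) / m))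
        Filter.atTop = β := by
  refine ⟨gammaZ (e1 β), gammaZ (e2 β), ?_, ?_⟩
  case refine_1 =>
    intro m
    rcases Nat.eq_zero_or_pos m with rfl | hm
    · rw [pChoose_zero, pChoose_zero]; norm_num
    · exact mul_ne_zero (val_nonneg_ne (he1 hβ) (hgap1 hβ) m hm).1
        (val_nonneg_ne (he2 hβ) (hgap2 hβ) m hm).1
  case refine_2 =>
    set u : ℕ → ℝ := fun m =>
      (((pChoose 2 (gammaZ (e1 β) : ℚ_[2]) m * pChoose 2 (gammaZ (e2 β) : ℚ_[2]) m).valuation : ℝ)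
        / m) with hu
    have hu_nonneg : ∀ m, 0 ≤ u m := by
      intro m
      rcases Nat.eq_zero_or_pos m with rfl | hm
      · simp [hu]
      · obtain ⟨hne1, hv1⟩ := val_nonneg_ne (he1 hβ) (hgap1 hβ) m hm
        obtain ⟨hne2, hv2⟩ := val_nonneg_ne (he2 hβ) (hgap2 hβ) m hm
        have hval := Padic.valuation_mul hne1 hne2
        rw [hu]
        simp only
        rw [hval]
        apply div_nonneg _ (Nat.cast_nonneg m)
        push_cast
        exact add_nonneg (by exact_mod_cast hv1) (by exact_mod_cast hv2)
    -- Step B : frequently u m ≤ β + ε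
    have hB : ∀ ε : ℝ, 0 < ε → ∃ᶠ m in atTop, u m ≤ β + ε := by
      intro ε hε
      rw [Filter.frequently_atTop]
      intro N
      obtain ⟨j₀, hj₀⟩ := pow_unbounded_of_one_lt (1 / ε) (one_lt_two (α := ℝ))
      set i := 2 * (N + j₀ + 1) with hi
      refine ⟨2 ^ nseq β i, ?_, ?_⟩
      · have h1 : i < 2 ^ i := Nat.lt_two_pow_self
        have h2 : (2:ℕ) ^ i ≤ 2 ^ nseq β i :=
          Nat.pow_le_pow_right (by norm_num) (by have := nseq_ge hβ i; omega)
        omega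
      · obtain ⟨hne1, hne2, hv1, hv2⟩ := witness hβ (show 2 ≤ i by omega) (by omega)
        have hval := Padic.valuation_mul hne1 hne2
        have hd : nseq β (i + 1) - nseq β i = ⌈β * 2 ^ nseq β i⌉₊ := by
          have := nseq_succ (β := β) i; omega
        rw [hu]
        simp only
        rw [hval, hv1, hv2, hd]
        set X := nseq β i with hX
        have hXc : ((2 ^ X : ℕ) : ℝ) = (2:ℝ) ^ X := by push_cast; ring
        rw [zero_add]
        have hpos : (0:ℝ) < 2 ^ X := by positivity
        rw [Int.cast_natCast, hXc, div_le_iff₀ hpos]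
        have hceil : (⌈β * 2 ^ X⌉₊ : ℝ) < β * 2 ^ X + 1 :=
          Nat.ceil_lt_add_one (by positivity)
        have hεX : 1 ≤ ε * 2 ^ X := by
          have h1 : (2:ℝ) ^ j₀ ≤ 2 ^ X := by
            apply pow_le_pow_right₀ (by norm_num)
            have := nseq_ge hβ i
            omega
          have h2 : 1 / ε < 2 ^ X := lt_of_lt_of_le hj₀ h1
          rw [div_lt_iff₀ hε] at h2
          nlinarith
        nlinarith
    -- Step A : eventually β - ε ≤ u m
    have hA : ∀ ε : ℝ, 0 < ε → ∀ᶠ m in atTop, β - ε ≤ u m := by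
      intro ε hε
      obtain ⟨I, hI2, hIb⟩ := epsilon_bound hβ hε
      rw [Filter.eventually_atTop]
      refine ⟨2 ^ nseq β I, fun m hm => ?_⟩
      have hm1 : 1 ≤ m := le_trans Nat.one_le_two_pow hm
      set P : ℕ → Prop := fun j => 2 ^ nseq β j ≤ m with hP
      have hPI : P I := hm
      have hIm : I ≤ m := by
        have h1 := nseq_ge hβ I
        have h2 : nseq β I < 2 ^ nseq β I := Nat.lt_two_pow_self
        omega
      set i := Nat.findGreatest P m with hidef
      have hiI : I ≤ i := Nat.le_findGreatest hIm hPI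
      have hPi : P i := Nat.findGreatest_spec hIm hPI
      have him : i + 1 ≤ m := by
        have h1 := nseq_ge hβ i
        have h2 : i + 1 < 2 ^ (i + 1) := Nat.lt_two_pow_self
        have h3 : (2:ℕ) ^ (i + 1) ≤ 2 ^ nseq β i := Nat.pow_le_pow_right (by norm_num) h1
        have := hPi
        rw [hP] at this
        omega
      have hnot : ¬ P (i + 1) := Nat.findGreatest_is_greatest (Nat.lt_succ_self i) him
      have hm2' : m < 2 ^ nseq β (i + 1) := by
        rw [hP] at hnot
        omega
      have hlow := lower hβ (le_trans hI2 hiI) hPi hm2'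
      have hbound := hIb i hiI
      obtain ⟨hne1, hv1⟩ := val_nonneg_ne (he1 hβ) (hgap1 hβ) m hm1
      obtain ⟨hne2, hv2⟩ := val_nonneg_ne (he2 hβ) (hgap2 hβ) m hm1
      have hval := Padic.valuation_mul hne1 hne2
      rw [hu]
      simp only
      rw [hval]
      have hmpos : (0:ℝ) < m := by exact_mod_cast hm1
      rw [le_div_iff₀ hmpos]
      have hcast : (2:ℝ) ^ nseq β i ≤ m := by
        have : ((2 ^ nseq β i : ℕ) : ℝ) ≤ (m : ℝ) := by exact_mod_cast hPi
        push_cast at this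
        linarith
      have hmul : ε * 2 ^ nseq β i ≤ ε * m := mul_le_mul_of_nonneg_left hcast hε.le
      push_cast
      push_cast at hlow
      linarith
    -- conclude
    have hbdd : IsBoundedUnder (· ≥ ·) atTop u := ⟨0, Filter.eventually_map.mpr
      (Filter.Eventually.of_forall hu_nonneg)⟩
    have hcob : IsCoboundedUnder (· ≥ ·) atTop u := by
      refine ⟨β + 1, fun a ha => ?_⟩
      have hfreq := hB 1 one_pos
      rw [Filter.eventually_map] at ha
      obtain ⟨m, h1, h2⟩ := (hfreq.and_eventually ha).exists
      linarith
    apply le_antisymm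
    · apply le_of_forall_pos_le_add
      intro ε hε
      exact liminf_le_of_frequently_le (hB ε hε) hbdd
    · by_contra hlt
      push_neg at hlt
      have hε : 0 < (β - liminf u atTop) / 2 := by linarith
      have := le_liminf_of_le hcob (hA _ hε)
      linarith

end Stmt9Aux

/-- For every `β > 0` there are `γ₁, γ₂ ∈ ℤ₂` with `C(γ₁,m)C(γ₂,m) ≠ 0` for all `m` and
`liminf_m v₂(C(γ₁,m)C(γ₂,m))/m = β`. -/
theorem stmt_9 (β : ℝ) (hβ : 0 < β) :
    ∃ γ₁ γ₂ : ℤ_[2],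
      (∀ m : ℕ, pChoose 2 (γ₁ : ℚ_[2]) m * pChoose 2 (γ₂ : ℚ_[2]) m ≠ 0) ∧
      Filter.liminf (fun m : ℕ =>
          (((pChoose 2 (γ₁ : ℚ_[2]) m * pChoose 2 (γ₂ : ℚ_[2]) m).valuation : ℝ) / m))
        Filter.atTop = β := by
  exact Stmt9Aux.main hβ
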